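/- Every semiselective coideal is Ramsey: Let H ⊆ ℕ^[∞] be a semiselective coideal. Then for every integer n ≥ 2, every map f from the n-element subsets of ℕ to {0,1}, and every A ∈ H, there exists B ∈ H with B ⊆ A such that f is constant on the n-element subsets of B. -/
import Mathlib


open Set

/-- `ellR n A` : the set of the `n` least elements of `A ⊆ ℕ` (the approximation `rₙ(A)`). -/
noncomputable def ellR (n : ℕ) (A : Set ℕ) : Finset ℕ :=
  (Finset.range n).image (Nat.nth (· ∈ A))

/-- `a ⊏ B` : the finite set `a` is an initial segment of `B`. -/
def IsInitSeg (a : Finset ℕ) (B : Set ℕ) : Prop :=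
  ↑a ⊆ B ∧ ∀ x ∈ B, x ∉ a → ∀ y ∈ a, y < x

/-- The Ellentuck neighborhood `[a, A] = {B ∈ ℕ^[∞] : a ⊏ B ∧ B ⊆ A}`. -/
def ENbhd (a : Finset ℕ) (A : Set ℕ) : Set (Set ℕ) :=
  {B | B.Infinite ∧ IsInitSeg a B ∧ B ⊆ A}

/-- `[n, A] := [rₙ(A), A]`. -/
noncomputable def ENbhdN (n : ℕ) (A : Set ℕ) : Set (Set ℕ) :=
  ENbhd (ellR n A) A

/-- `depth_A(a)` : the least `n` with `a ⊆ rₙ(A)`. -/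
noncomputable def depth (A : Set ℕ) (a : Finset ℕ) : ℕ :=
  sInf {n | a ⊆ ellR n A}

/-- The one-step extensions of `a` inside `B`: the sets `a ∪ {x}` with `x ∈ B` greater
than every element of `a` (i.e. `r_{|a|+1}[a,B]`). -/
def oneStepExt (a : Finset ℕ) (B : Set ℕ) : Set (Finset ℕ) :=
  {b | ∃ x ∈ B, (∀ y ∈ a, y < x) ∧ b = insert x a}

/-- `H ⊆ ℕ^[∞]` is a coideal: upward closed, satisfies A3 mod H and A4 mod H. -/
def IsCoideal (H : Set (Set ℕ)) : Prop :=
  (∀ A ∈ H, A.Infinite) ∧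
  (∀ A ∈ H, ∀ B : Set ℕ, B.Infinite → A ⊆ B → B ∈ H) ∧
  (∀ A ∈ H, ∀ a : Finset ℕ, ↑a ⊆ A →
    (∀ B ∈ H ∩ ENbhdN (depth A a) A, (ENbhd a B).Nonempty) ∧
    (∀ B ∈ H, B ⊆ A → (ENbhd a B).Nonempty →
      ∃ A' ∈ H ∩ ENbhdN (depth A a) A,
        (ENbhd a A').Nonempty ∧ ENbhd a A' ⊆ ENbhd a B)) ∧
  (∀ A ∈ H, ∀ a : Finset ℕ, ↑a ⊆ A → ∀ O : Set (Finset ℕ),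
    ∃ B ∈ H ∩ ENbhdN (depth A a) A,
      oneStepExt a B ⊆ O ∨ oneStepExt a B ∩ O = ∅)

/-- `D` is dense open in `S` (with respect to `⊆`). -/
def DenseOpenIn (D S : Set (Set ℕ)) : Prop :=
  (∀ A ∈ S, ∃ B ∈ D, B ⊆ A) ∧ (∀ A ∈ S, ∀ B ∈ D, A ⊆ B → A ∈ D)

/-- `C` diagonalizes the family `{A_a}`: for every finite `a ⊆ C`, `[a,C] ⊆ [a,A_a]`. -/
def Diagonalizes (C : Set ℕ) (Afam : Finset ℕ → Set ℕ) : Prop :=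
  ∀ a : Finset ℕ, ↑a ⊆ C → ENbhd a C ⊆ ENbhd a (Afam a)

/-- `H` is a semiselective coideal. -/
def Semiselective (H : Set (Set ℕ)) : Prop :=
  IsCoideal H ∧
  ∀ A ∈ H, ∀ Dfam : Finset ℕ → Set (Set ℕ),
    (∀ a : Finset ℕ, ↑a ⊆ A → DenseOpenIn (Dfam a) (H ∩ ENbhdN (depth A a) A)) →
    ∀ B ∈ H, B ⊆ A →
      ∃ C ∈ H, C ⊆ B ∧ ∃ Afam : Finset ℕ → Set ℕ,
        (∀ a : Finset ℕ, ↑a ⊆ A → Afam a ∈ Dfam a) ∧ Diagonalizes C Afam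

/-- `X` is `H`-Ramsey. -/
def HRamsey (H X : Set (Set ℕ)) : Prop :=
  ∀ a : Finset ℕ, ∀ A ∈ H, (ENbhd a A).Nonempty →
    ∃ B ∈ ENbhd a A ∩ H, ENbhd a B ⊆ X ∨ ENbhd a B ∩ X = ∅

/-- `X` is `H`-Ramsey null. -/
def HRamseyNull (H X : Set (Set ℕ)) : Prop :=
  ∀ a : Finset ℕ, ∀ A ∈ H, (ENbhd a A).Nonempty →
    ∃ B ∈ ENbhd a A ∩ H, ENbhd a B ∩ X = ∅

/-- `X` is `H`-Baire. -/
def HBaire (H X : Set (Set ℕ)) : Prop :=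
  ∀ a : Finset ℕ, ∀ A ∈ H, (ENbhd a A).Nonempty →
    ∃ (b : Finset ℕ) (B : Set ℕ), B ∈ H ∧ (ENbhd b B).Nonempty ∧
      ENbhd b B ⊆ ENbhd a A ∧ (ENbhd b B ⊆ X ∨ ENbhd b B ∩ X = ∅)

/-- `X` is `H`-meager. -/
def HMeager (H X : Set (Set ℕ)) : Prop :=
  ∀ a : Finset ℕ, ∀ A ∈ H, (ENbhd a A).Nonempty →
    ∃ (b : Finset ℕ) (B : Set ℕ), B ∈ H ∧ (ENbhd b B).Nonempty ∧
      ENbhd b B ⊆ ENbhd a A ∧ ENbhd b B ∩ X = ∅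

/-- `Exp(H) = {[n,A] : n ∈ ℕ, A ∈ H}`. -/
def ExpH (H : Set (Set ℕ)) : Set (Set (Set ℕ)) :=
  {S | ∃ (n : ℕ) (A : Set ℕ), A ∈ H ∧ S = ENbhdN n A}

/-- `X` is `Exp(H)`-nowhere dense. -/
def ExpNwd (H X : Set (Set ℕ)) : Prop :=
  ∀ S ∈ ExpH H, ∃ T ∈ ExpH H, T ⊆ S ∧ T ∩ X = ∅

/-- Combinatorial forcing: `A` accepts `a` (relative to `H` and `F`). -/
def Accepts (H : Set (Set ℕ)) (F : Set (Finset ℕ)) (A : Set ℕ) (a : Finset ℕ) : Prop :=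
  ∀ B ∈ H ∩ ENbhdN (depth A a) A, ∃ n : ℕ, ellR n B ∈ F

/-- Combinatorial forcing: `A` rejects `a` (relative to `H` and `F`). -/
def Rejects (H : Set (Set ℕ)) (F : Set (Finset ℕ)) (A : Set ℕ) (a : Finset ℕ) : Prop :=
  ∀ B ∈ H ∩ ENbhdN (depth A a) A, ¬ Accepts H F B a

/-- `A ≤* B` : `A` is an almost-reduction of `B`. -/
def AlmostRed (A B : Set ℕ) : Prop :=
  ∃ a : Finset ℕ, ↑a ⊆ A ∧ ENbhd a A ⊆ ENbhd a B

/-- `D ⊆ H` is dense open in the preorder `(H, ≤*)`. -/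
def DenseOpenStar (H D : Set (Set ℕ)) : Prop :=
  D ⊆ H ∧ (∀ A ∈ H, ∃ B ∈ D, AlmostRed B A) ∧
  (∀ A ∈ H, ∀ B ∈ D, AlmostRed A B → A ∈ D)

/-- The family `{A_a}` is filtered by `⊆` (indexed by the finite subsets of `A`). -/
def FilteredFamily (A : Set ℕ) (Afam : Finset ℕ → Set ℕ) : Prop :=
  ∀ a b : Finset ℕ, ↑a ⊆ A → ↑b ⊆ A →
    ∃ c : Finset ℕ, ↑c ⊆ A ∧ Afam c ⊆ Afam a ∧ Afam c ⊆ Afam b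

/-- `H` is a selective coideal. -/
def SelectiveCoideal (H : Set (Set ℕ)) : Prop :=
  IsCoideal H ∧
  ∀ A ∈ H, ∀ Afam : Finset ℕ → Set ℕ,
    (∀ a : Finset ℕ, ↑a ⊆ A → Afam a ∈ H ∧ Afam a ⊆ A ∧ (ENbhd a (Afam a)).Nonempty) →
    FilteredFamily A Afam →
    ∃ B ∈ H, B ⊆ A ∧ Diagonalizes B Afam

/-- `U ⊆ ℕ^[∞]` is a filter on `(ℕ^[∞], ⊆)`. -/
def IsEFilter (U : Set (Set ℕ)) : Prop :=
  (∀ A ∈ U, A.Infinite) ∧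
  (∀ A ∈ U, ∀ B : Set ℕ, B.Infinite → A ⊆ B → B ∈ U) ∧
  (∀ A ∈ U, ∀ B ∈ U, ∀ a : Finset ℕ,
    (ENbhd a A).Nonempty → (ENbhd a B).Nonempty →
      ∃ C ∈ U, C ∈ ENbhd a A ∩ ENbhd a B)

/-- `U` is an ultrafilter: a maximal filter satisfying A3 mod U. -/
def IsEUltrafilter (U : Set (Set ℕ)) : Prop :=
  IsEFilter U ∧
  (∀ U' : Set (Set ℕ), IsEFilter U' → U ⊆ U' → U' = U) ∧
  (∀ A ∈ U, ∀ a : Finset ℕ, ↑a ⊆ A →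
    (∀ B ∈ U ∩ ENbhdN (depth A a) A, (ENbhd a B).Nonempty) ∧
    (∀ B ∈ U, B ⊆ A → (ENbhd a B).Nonempty →
      ∃ A' ∈ U ∩ ENbhdN (depth A a) A,
        (ENbhd a A').Nonempty ∧ ENbhd a A' ⊆ ENbhd a B))

/-- `U` is a selective ultrafilter. -/
def SelectiveUltrafilter (U : Set (Set ℕ)) : Prop :=
  IsEUltrafilter U ∧
  ∀ A ∈ U, ∀ Afam : Finset ℕ → Set ℕ,
    (∀ a : Finset ℕ, ↑a ⊆ A → Afam a ∈ U ∧ Afam a ⊆ A ∧ (ENbhd a (Afam a)).Nonempty) →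
    FilteredFamily A Afam →
    ∃ B ∈ U, B ⊆ A ∧ Diagonalizes B Afam

/-- The conditions of the Mathias poset `M_U` : pairs `(a, A)` with `A ∈ U`, `[a,A] ≠ ∅`. -/
def MathiasCond (U : Set (Set ℕ)) : Set (Finset ℕ × Set ℕ) :=
  {p | p.2 ∈ U ∧ (ENbhd p.1 p.2).Nonempty}

/-- `D` is a dense open subset of the Mathias poset `M_U`
(ordered by `(a,A) ≤ (b,B) ↔ [a,A] ⊆ [b,B]`). -/
def MathiasDenseOpen (U : Set (Set ℕ)) (D : Set (Finset ℕ × Set ℕ)) : Prop :=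
  D ⊆ MathiasCond U ∧
  (∀ p ∈ MathiasCond U, ∃ q ∈ D, ENbhd q.1 q.2 ⊆ ENbhd p.1 p.2) ∧
  (∀ p ∈ MathiasCond U, ∀ q ∈ D, ENbhd p.1 p.2 ⊆ ENbhd q.1 q.2 → p ∈ D)

/-- `A` captures `(a, D)`. -/
def Captures (U : Set (Set ℕ)) (D : Set (Finset ℕ × Set ℕ))
    (a : Finset ℕ) (A : Set ℕ) : Prop :=
  A ∈ U ∧ (ENbhd a A).Nonempty ∧
  ∀ B ∈ ENbhd a A, ∃ m : ℕ, m > a.card ∧ (ellR m B, A) ∈ D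


/-- Every semiselective coideal is Ramsey: homogeneity for `n`-element subsets. -/
private lemma exists_subset_ellR (A : Set ℕ) (a : Finset ℕ)
    (ha : ↑a ⊆ A) : ∃ n, a ⊆ ellR n A := by
  classical
  have hsurj : ∀ x ∈ a, ∃ k, Nat.nth (· ∈ A) k = x := fun x hx =>
    ⟨Nat.count (· ∈ A) x, Nat.nth_count (ha hx)⟩
  choose k hk using fun (x : a) => hsurj x x.2
  refine ⟨(a.attach.sup fun x => k x) + 1, ?_⟩
  intro x hx
  simp only [ellR, Finset.mem_image, Finset.mem_range]
  exact ⟨k ⟨x, hx⟩, Nat.lt_succ_of_le (Finset.le_sup (Finset.mem_attach a ⟨x, hx⟩)),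
    hk ⟨x, hx⟩⟩

private lemma subset_ellR_depth (A : Set ℕ) (a : Finset ℕ)
    (ha : ↑a ⊆ A) : a ⊆ ellR (depth A a) A :=
  Nat.sInf_mem (exists_subset_ellR A a ha)

private lemma step_lemma (H : Set (Set ℕ)) (hH : Semiselective H)
    (A : Set ℕ) (hA : A ∈ H) (g : Finset ℕ → Fin 2) :
    ∃ C ∈ H, C ⊆ A ∧ ∃ g' : Finset ℕ → Fin 2,
      ∀ a : Finset ℕ, ↑a ⊆ C → ∀ x ∈ C, (∀ y ∈ a, y < x) →
        g (insert x a) = g' a := by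
  classical
  obtain ⟨hCo, hSel⟩ := hH
  obtain ⟨hInf, hUp, hA3, hA4⟩ := hCo
  set O : Finset ℕ → Set (Finset ℕ) := fun _ => {b | g b = 0} with hO
  set Dfam : Finset ℕ → Set (Set ℕ) := fun a =>
    {B | B ∈ H ∧ B ⊆ A ∧ (oneStepExt a B ⊆ O a ∨ oneStepExt a B ∩ O a = ∅)} with hD
  have hdo : ∀ a : Finset ℕ, ↑a ⊆ A →
      DenseOpenIn (Dfam a) (H ∩ ENbhdN (depth A a) A) := by
    intro a ha
    constructor
    · rintro B' ⟨hB'H, hB'inf, hB'init, hB'A⟩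
      have haB' : ↑a ⊆ B' := fun x hx =>
        hB'init.1 (by exact_mod_cast (subset_ellR_depth A a ha hx))
      obtain ⟨B, ⟨hBH, hBmem⟩, hhom⟩ := hA4 B' hB'H a haB' (O a)
      obtain ⟨hBinf, hBinit, hBB'⟩ := hBmem
      exact ⟨B, ⟨hBH, hBB'.trans hB'A, hhom⟩, hBB'⟩
    · rintro A' ⟨hA'H, hA'inf, hA'init, hA'A⟩ B ⟨hBH, hBA, hhom⟩ hA'B
      refine ⟨hA'H, hA'A, ?_⟩
      have hsub : oneStepExt a A' ⊆ oneStepExt a B := by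
        rintro b ⟨x, hx, hxa, rfl⟩
        exact ⟨x, hA'B hx, hxa, rfl⟩
      rcases hhom with h | h
      · exact Or.inl (hsub.trans h)
      · exact Or.inr (Set.eq_empty_of_subset_empty
          (h ▸ Set.inter_subset_inter_left _ hsub))
  obtain ⟨C, hCH, hCA, Afam, hAfam, hdiag⟩ :=
    hSel A hA Dfam hdo A hA (subset_refl A)
  refine ⟨C, hCH, hCA, fun a => if oneStepExt a (Afam a) ⊆ O a then 0 else 1, ?_⟩
  intro a haC x hxC hax
  have hmem : x ∈ Afam a := by
    have hDmem : (↑a ∪ {y ∈ C | x ≤ y}) ∈ ENbhd a C := by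
      refine ⟨?_, ⟨Set.subset_union_left, ?_⟩, ?_⟩
      · have hsub : C \ Set.Iio x ⊆ {y ∈ C | x ≤ y} := fun y hy =>
          ⟨hy.1, not_lt.mp hy.2⟩
        exact ((((hInf C hCH).diff (Set.finite_Iio x)).mono hsub).mono
          Set.subset_union_right)
      · rintro z (hz | hz) hza y hy
        · exact absurd hz hza
        · exact lt_of_lt_of_le (hax y hy) hz.2
      · rintro z (hz | hz)
        · exact haC hz
        · exact hz.1
    exact (hdiag a haC hDmem).2.2 (Or.inr ⟨hxC, le_refl x⟩)
  have hOne : insert x a ∈ oneStepExt a (Afam a) := ⟨x, hmem, hax, rfl⟩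
  have hhom := (hAfam a (haC.trans hCA)).2.2
  by_cases hc : oneStepExt a (Afam a) ⊆ O a
  · simp only [if_pos hc]
    exact hc hOne
  · simp only [if_neg hc]
    rcases hhom with h | h
    · exact absurd h hc
    · have h0 : g (insert x a) ≠ 0 := fun hz =>
        (Set.eq_empty_iff_forall_notMem.mp h _) ⟨hOne, hz⟩
      have h1 : (g (insert x a)).val ≠ 0 := fun hv => h0 (Fin.ext hv)
      have h2 := (g (insert x a)).isLt
      exact Fin.ext (by omega)

private lemma iter_lemma (H : Set (Set ℕ)) (hH : Semiselective H) :
    ∀ m : ℕ, ∀ A ∈ H, ∀ g : Finset ℕ → Fin 2,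
      ∃ C ∈ H, C ⊆ A ∧ ∃ i : Fin 2,
        ∀ s : Finset ℕ, s.card = m → ↑s ⊆ C → g s = i := by
  intro m
  induction m with
  | zero =>
    intro A hA g
    exact ⟨A, hA, subset_refl A, g ∅, fun s hs _ => by
      rw [Finset.card_eq_zero.mp hs]⟩
  | succ m ih =>
    intro A hA g
    obtain ⟨C₁, hC₁H, hC₁A, g', hg'⟩ := step_lemma H hH A hA g
    obtain ⟨C, hCH, hCC₁, i, hi⟩ := ih C₁ hC₁H g'
    refine ⟨C, hCH, hCC₁.trans hC₁A, i, ?_⟩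
    intro s hs hsC
    have hne : s.Nonempty := Finset.card_pos.mp (by omega)
    have hxs : s.max' hne ∈ s := s.max'_mem hne
    have hcard : (s.erase (s.max' hne)).card = m := by
      simp [Finset.card_erase_of_mem hxs, hs]
    have haC : ↑(s.erase (s.max' hne)) ⊆ C :=
      (Finset.coe_subset.mpr (Finset.erase_subset _ s)).trans hsC
    have hlt : ∀ y ∈ s.erase (s.max' hne), y < s.max' hne := fun y hy =>
      lt_of_le_of_ne (s.le_max' y (Finset.mem_of_mem_erase hy))
        (Finset.ne_of_mem_erase hy)
    have hkey := hg' (s.erase (s.max' hne)) (haC.trans hCC₁)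
      (s.max' hne) (hCC₁ (hsC hxs)) hlt
    rw [Finset.insert_erase hxs] at hkey
    rw [hkey]
    exact hi _ hcard haC

/-- Every semiselective coideal is Ramsey: homogeneity for `n`-element subsets. -/
theorem semiselective_is_ramsey (H : Set (Set ℕ)) (hH : Semiselective H)
    (n : ℕ) (hn : 2 ≤ n) (f : Finset ℕ → Fin 2) (A : Set ℕ) (hA : A ∈ H) :
    ∃ B ∈ H, B ⊆ A ∧ ∃ i : Fin 2,
      ∀ s : Finset ℕ, s.card = n → ↑s ⊆ B → f s = i := by
  obtain ⟨C, hCH, hCA, i, hi⟩ := iter_lemma H hH n A hA f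
  exact ⟨C, hCH, hCA, i, hi⟩
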